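/- Let F = {S_1, S_2, …, S_m} be a finite family of finite nonempty sets, let u be an element not contained in any S_i, let E_i = S_i ∪ {u} for each i, let E_0 = E_1 ∪ … ∪ E_m, and let H be the acyclic hypergraph with hyperedge family {E_0, E_1, …, E_m}. Let T be the star join tree in which each E_i (1 ≤ i ≤ m) is adjacent to E_0. Then F contains two distinct sets S_i and S_j with S_i ⊆ S_j if and only if T is not the unique join tree for H (i.e., there exists a join tree for H not equal to T). -/

import Mathlib

open SimpleGraph

/-- `T` is a join tree for the hypergraph whose hyperedge family is `E` (indexed by `ι`):
`T` is a tree on the hyperedges and, for every vertex `v`, the hyperedges containing `v`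
induce a connected (nonempty sets being preconnected) subgraph of `T`. -/
def IsJoinTree {V ι : Type*} (E : ι → Finset V) (T : SimpleGraph ι) : Prop :=
  T.IsTree ∧ ∀ v : V, (T.induce {i | v ∈ E i}).Preconnected

/-- A hypergraph is acyclic if it admits a join tree. -/
def IsAcyclicHG {V ι : Type*} (E : ι → Finset V) : Prop :=
  ∃ T : SimpleGraph ι, IsJoinTree E T
/-- The hyperedge family built from the family `S` and the new vertex `u`:
`E_i = S_i ∪ {u}` (indexed by `some i`) and `E_0 = E_1 ∪ ⋯ ∪ E_m` (indexed by `none`). -/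
def FamE {α : Type*} [DecidableEq α] {m : ℕ} (S : Fin m → Finset α) (u : α) :
    Option (Fin m) → Finset α
  | none => Finset.univ.biUnion fun i => insert u (S i)
  | some i => insert u (S i)


/-- If `A` is closed under adjacency, walks starting in `A` stay in `A`. -/
private lemma walk_mem_closed {V : Type*} {G : SimpleGraph V} {A : Set V}
    (hA : ∀ ⦃a b⦄, a ∈ A → G.Adj a b → b ∈ A) :
    ∀ {x y : V}, G.Walk x y → x ∈ A → y ∈ A
  | _, _, SimpleGraph.Walk.nil, hx => hx
  | _, _, SimpleGraph.Walk.cons h p, hx => walk_mem_closed hA p (hA hx h)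

private lemma no_reach {V : Type*} {G : SimpleGraph V} {A : Set V}
    (hA : ∀ ⦃a b⦄, a ∈ A → G.Adj a b → b ∈ A) {x y : V} (hx : x ∈ A) (hy : y ∉ A) :
    ¬ G.Reachable x y := by
  rintro ⟨w⟩
  exact hy (walk_mem_closed hA w hx)

/-- A walk avoiding the vertex `b` yields reachability in `G` minus the edge `s(a, b)`. -/
private lemma reach_del {V : Type*} {G : SimpleGraph V} {a b : V} :
    ∀ {x y : V} (w : G.Walk x y), b ∉ w.support →
      (G \ SimpleGraph.fromEdgeSet {s(a, b)}).Reachable x y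
  | _, _, SimpleGraph.Walk.nil, _ => Reachable.refl _
  | x, y, SimpleGraph.Walk.cons (v := z) h p, hb => by
      rw [SimpleGraph.Walk.support_cons, List.mem_cons, not_or] at hb
      have hz : b ≠ z := fun e => hb.2 (e ▸ p.start_mem_support)
      have hadj : (G \ SimpleGraph.fromEdgeSet {s(a, b)}).Adj x z := by
        rw [sdiff_adj]
        refine ⟨h, ?_⟩
        rw [fromEdgeSet_adj]
        rintro ⟨he, -⟩
        rw [Set.mem_singleton_iff, Sym2.eq_iff] at he
        rcases he with ⟨rfl, rfl⟩ | ⟨rfl, rfl⟩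
        · exact hz rfl
        · exact hb.1 rfl
      exact hadj.reachable.trans (reach_del p hb.2)

/-- If the subgraph induced on `A` is preconnected, `x, y ∈ A`, `b ∉ A`, then `x` and `y`
are reachable in `G` minus the edge `s(a, b)`. -/
private lemma reach_avoid {V : Type*} {G : SimpleGraph V} {A : Set V}
    (h : (G.induce A).Preconnected) {x y b : V} (hx : x ∈ A) (hy : y ∈ A) (hb : b ∉ A)
    (a : V) : (G \ SimpleGraph.fromEdgeSet {s(a, b)}).Reachable x y := by
  obtain ⟨p⟩ := h ⟨x, hx⟩ ⟨y, hy⟩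
  refine reach_del (p.map (SimpleGraph.Embedding.induce A).toHom) ?_
  erw [SimpleGraph.Walk.support_map]
  intro hmem
  rw [List.mem_map] at hmem
  obtain ⟨⟨c, hc⟩, -, rfl⟩ := hmem
  exact hb hc

/-- `F` contains two distinct sets `S_i ⊆ S_j` iff the star tree (in
which each `E_i`, `1 ≤ i ≤ m`, is adjacent to `E_0`) is not the unique join tree of `H`,
i.e. iff there exists a join tree for `H` different from the star tree. -/
theorem stmt2 {α : Type*} [DecidableEq α] {m : ℕ} (hm : 0 < m)
    (S : Fin m → Finset α) (hS : ∀ i, (S i).Nonempty)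
    (u : α) (hu : ∀ i, u ∉ S i) :
    (∃ i j : Fin m, i ≠ j ∧ S i ⊆ S j) ↔
      ∃ T : SimpleGraph (Option (Fin m)), IsJoinTree (FamE S u) T ∧
        T ≠ SimpleGraph.fromRel fun a _ => a = none := by
  constructor
  · -- FORWARD
    rintro ⟨i, j, hij, hsub⟩
    set T' : SimpleGraph (Option (Fin m)) :=
      SimpleGraph.fromRel (fun a b => (a = none ∧ b ≠ some i) ∨ (a = some j ∧ b = some i))
      with hT'
    have hAdj : ∀ a b : Option (Fin m), T'.Adj a b ↔ a ≠ b ∧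
        (((a = none ∧ b ≠ some i) ∨ (a = some j ∧ b = some i)) ∨
         ((b = none ∧ a ≠ some i) ∨ (b = some j ∧ a = some i))) :=
      fun a b => SimpleGraph.fromRel_adj _ a b
    have hadj_nk : ∀ k : Fin m, k ≠ i → T'.Adj none (some k) := by
      intro k hk
      rw [hAdj]
      exact ⟨by simp, Or.inl (Or.inl ⟨rfl, by simpa using hk⟩)⟩
    have hadj_ji : T'.Adj (some j) (some i) := by
      rw [hAdj]
      exact ⟨by simpa using hij.symm, Or.inl (Or.inr ⟨rfl, rfl⟩)⟩
    have hadj_jnone : T'.Adj none (some j) := hadj_nk j (Ne.symm hij)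
    -- connectivity
    have hreach : ∀ x : Option (Fin m), T'.Reachable x none := by
      intro x
      match x with
      | none => exact SimpleGraph.Reachable.refl _
      | some k =>
        by_cases hk : k = i
        · subst hk
          exact hadj_ji.symm.reachable.trans hadj_jnone.symm.reachable
        · exact (hadj_nk k hk).symm.reachable
    have hconn : T'.Connected := SimpleGraph.Connected.mk (fun x y => (hreach x).trans (hreach y).symm)
    -- acyclicity
    have H1 : ∀ k : Fin m, k ≠ i →
        ¬ (T' \ SimpleGraph.fromEdgeSet {s((none : Option (Fin m)), some k)}).Reachable
          (some k) none := by
      intro k hk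
      refine no_reach (A := {x | x = some k ∨ (k = j ∧ x = some i)}) ?_ (Or.inl rfl) (by simp)
      rintro a b ha hab
      rw [sdiff_adj] at hab
      obtain ⟨hab, hdel⟩ := hab
      rw [hAdj] at hab
      obtain ⟨hne, hcase⟩ := hab
      have hdel' : s(a, b) ≠ s((none : Option (Fin m)), some k) := by
        intro he
        exact hdel ((SimpleGraph.fromEdgeSet_adj _).mpr ⟨he, hne⟩)
      rcases ha with rfl | ⟨rfl, rfl⟩
      · -- a = some k
        rcases hcase with (⟨h1, -⟩ | ⟨h1, rfl⟩) | (⟨rfl, -⟩ | ⟨rfl, h2⟩)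
        · exact absurd h1 (by simp)
        · exact Or.inr ⟨by simpa using h1, rfl⟩
        · exact absurd (Sym2.eq_swap) (fun h => hdel' h)
        · exact absurd (by simpa using h2) hk
      · -- a = some i, k = j
        rcases hcase with (⟨h1, -⟩ | ⟨h1, -⟩) | (⟨rfl, h2⟩ | ⟨rfl, -⟩)
        · exact absurd h1 (by simp)
        · exact absurd (by simpa using h1) hij
        · exact absurd rfl h2
        · exact Or.inl rfl
    have H2 : ¬ (T' \ SimpleGraph.fromEdgeSet {s((some j : Option (Fin m)), some i)}).Reachable
        (some i) (some j) := by
      refine no_reach (A := {x | x = some i}) ?_ rfl (by simpa using hij.symm)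
      rintro a b rfl hab
      rw [sdiff_adj] at hab
      obtain ⟨hab, hdel⟩ := hab
      rw [hAdj] at hab
      obtain ⟨hne, hcase⟩ := hab
      have hdel' : s((some i : Option (Fin m)), b) ≠ s((some j : Option (Fin m)), some i) := by
        intro he
        exact hdel ((SimpleGraph.fromEdgeSet_adj _).mpr ⟨he, hne⟩)
      rcases hcase with (⟨h1, -⟩ | ⟨h1, -⟩) | (⟨rfl, h2⟩ | ⟨rfl, -⟩)
      · exact absurd h1 (by simp)
      · exact absurd (by simpa using h1) hij
      · exact absurd rfl h2
      · exact absurd Sym2.eq_swap hdel'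
    have hacyc : T'.IsAcyclic := by
      rw [SimpleGraph.isAcyclic_iff_forall_adj_isBridge]
      intro a b hab
      rw [SimpleGraph.isBridge_iff]
      rw [hAdj] at hab
      obtain ⟨hne, hcase⟩ := hab
      rcases hcase with (⟨rfl, hbne⟩ | ⟨rfl, rfl⟩) | (⟨rfl, hane⟩ | ⟨rfl, rfl⟩)
      · match b, hbne, hne with
        | some k, hbne, hne =>
          intro h
          exact H1 k (by simpa using hbne) h.symm
        | none, hbne, hne => exact absurd rfl hne
      · intro h
        exact H2 h.symm
      · match a, hane, hne with
        | some k, hane, hne =>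
          rw [Sym2.eq_swap]
          exact H1 k (by simpa using hane)
        | none, hane, hne => exact absurd rfl hne
      · rw [Sym2.eq_swap]
        exact H2
    refine ⟨T', ⟨⟨hconn, hacyc⟩, ?_⟩, ?_⟩
    · -- join property
      intro v
      have hnoneAv : ∀ k : Fin m, v ∈ FamE S u (some k) → v ∈ FamE S u none := by
        intro k hk
        exact Finset.mem_biUnion.mpr ⟨k, Finset.mem_univ k, hk⟩
      have key : ∀ (z : Option (Fin m)) (hz : v ∈ FamE S u z) (hn : v ∈ FamE S u none),
          (T'.induce {x | v ∈ FamE S u x}).Reachable ⟨z, hz⟩ ⟨none, hn⟩ := by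
        intro z hz hn
        match z with
        | none => exact SimpleGraph.Reachable.refl _
        | some k =>
          by_cases hk : k = i
          · subst hk
            have hvj : v ∈ FamE S u (some j) := by
              rcases Finset.mem_insert.mp hz with rfl | hv
              · exact Finset.mem_insert_self _ _
              · exact Finset.mem_insert_of_mem (hsub hv)
            have h1 : (T'.induce {x | v ∈ FamE S u x}).Adj ⟨some k, hz⟩ ⟨some j, hvj⟩ :=
              hadj_ji.symm
            have h2 : (T'.induce {x | v ∈ FamE S u x}).Adj ⟨some j, hvj⟩ ⟨none, hn⟩ :=
              hadj_jnone.symm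
            exact h1.reachable.trans h2.reachable
          · have h1 : (T'.induce {x | v ∈ FamE S u x}).Adj ⟨some k, hz⟩ ⟨none, hn⟩ :=
              (hadj_nk k hk).symm
            exact h1.reachable
      rintro ⟨x, hx⟩ ⟨y, hy⟩
      have hn : v ∈ FamE S u none := by
        match x, hx with
        | none, hx => exact hx
        | some k, hx => exact hnoneAv k hx
      exact (key x hx hn).trans (key y hy hn).symm
    · -- T' ≠ star
      intro h
      have h1 : (SimpleGraph.fromRel fun a _ => (a : Option (Fin m)) = none).Adj none (some i) := by
        rw [SimpleGraph.fromRel_adj]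
        exact ⟨by simp, Or.inl rfl⟩
      rw [← h, hAdj] at h1
      rcases h1.2 with (⟨-, h2⟩ | ⟨h2, -⟩) | (⟨h2, -⟩ | ⟨-, h2⟩)
      · exact h2 rfl
      · exact absurd h2 (by simp)
      · exact absurd h2 (by simp)
      · exact absurd h2 (by simp)
  · -- BACKWARD
    rintro ⟨T, ⟨hTree, hJoin⟩, hne⟩
    have hedge : ∃ i j : Fin m, T.Adj (some i) (some j) := by
      by_contra hns
      push_neg at hns
      apply hne
      have hstar : ∀ k : Fin m, T.Adj none (some k) := by
        intro k
        obtain ⟨w⟩ := hTree.isConnected.preconnected (some k) none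
        cases w with
        | cons h p =>
          rename_i x
          match x, h with
          | none, h => exact h.symm
          | some l, h => exact absurd h (hns k l)
      ext a b
      rw [SimpleGraph.fromRel_adj]
      constructor
      · intro h
        refine ⟨h.ne, ?_⟩
        match a, b with
        | none, _ => exact Or.inl rfl
        | _, none => exact Or.inr rfl
        | some k, some l => exact absurd h (hns k l)
      · rintro ⟨hne', hor⟩
        match a, b, hor, hne' with
        | none, none, _, hne' => exact absurd rfl hne'
        | none, some k, _, _ => exact hstar k
        | some k, none, _, _ => exact (hstar k).symm
        | some k, some l, hor, _ => simp at hor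
    obtain ⟨i, j, hadj⟩ := hedge
    have hij : i ≠ j := by rintro rfl; exact hadj.ne rfl
    have hbridge := (SimpleGraph.isAcyclic_iff_forall_adj_isBridge.mp hTree.2) hadj
    rw [SimpleGraph.isBridge_iff] at hbridge
    have hkey : S i ⊆ S j ∨ S j ⊆ S i := by
      by_contra hc
      push_neg at hc
      obtain ⟨v, hvi, hvj⟩ := Finset.not_subset.mp hc.1
      obtain ⟨w, hwj, hwi⟩ := Finset.not_subset.mp hc.2
      have R1 : (T \ SimpleGraph.fromEdgeSet {s((some i : Option (Fin m)), some j)}).Reachable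
          (some i) none := by
        refine reach_avoid (hJoin v) ?_ ?_ ?_ (some i)
        · exact Finset.mem_insert_of_mem hvi
        · exact Finset.mem_biUnion.mpr ⟨i, Finset.mem_univ i, Finset.mem_insert_of_mem hvi⟩
        · intro hmem
          rcases Finset.mem_insert.mp hmem with rfl | hmem
          · exact hu i hvi
          · exact hvj hmem
      have R2 : (T \ SimpleGraph.fromEdgeSet {s((some i : Option (Fin m)), some j)}).Reachable
          (some j) none := by
        rw [Sym2.eq_swap]
        refine reach_avoid (hJoin w) ?_ ?_ ?_ (some j)
        · exact Finset.mem_insert_of_mem hwj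
        · exact Finset.mem_biUnion.mpr ⟨j, Finset.mem_univ j, Finset.mem_insert_of_mem hwj⟩
        · intro hmem
          rcases Finset.mem_insert.mp hmem with rfl | hmem
          · exact hu j hwj
          · exact hwi hmem
      exact hbridge (R1.trans R2.symm)
    rcases hkey with h | h
    · exact ⟨i, j, hij, h⟩
    · exact ⟨j, i, hij.symm, h⟩
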